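/- Let C and D be cocomplete cocommutative non-counital coalgebras over R whose primitive filtration submodules C_n, D_n are all flat R-modules. If f : C → D is a morphism of non-counital coalgebras whose restriction f|_{C₁} : C₁ → D₁ to the primitive parts is injective, then f is injective. -/

import Mathlib

open scoped TensorProduct

section Iter
variable (R : Type*) [CommRing R] (C : Type*) [AddCommGroup C] [Module R C]

/-- The iterated tensor power `C^{⊗(n+1)}` (so `Tpow R C 0 = C`). -/
noncomputable def Tpow : ℕ → ModuleCat R
  | 0 => ModuleCat.of R C
  | n + 1 => ModuleCat.of R (C ⊗[R] (Tpow n))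

/-- The iterated comultiplication `δ^(n) : C → C^{⊗(n+1)}` (so `δ^(0) = id`,
`δ^(1) = δ`); the primitive filtration is `C_n = ker δ^(n)`. -/
noncomputable def Dit (δ : C →ₗ[R] C ⊗[R] C) : (n : ℕ) → C →ₗ[R] Tpow R C n
  | 0 => LinearMap.id
  | n + 1 => (TensorProduct.map LinearMap.id (Dit δ n)).comp δ

end Iter

open LinearMap TensorProduct

section Aux

/-- A module that is the union of a monotone chain of flat submodules is flat. -/
theorem flat_of_union {R M : Type*} [CommRing R] [AddCommGroup M] [Module R M]
    (N : ℕ → Submodule R M) (hmono : Monotone N)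
    (hflat : ∀ n, Module.Flat R (N n)) (hcc : ∀ x : M, ∃ n, x ∈ N n) :
    Module.Flat R M := by
  rw [Module.Flat.iff_rTensor_injective']
  intro I
  rw [injective_iff_map_eq_zero]
  intro t ht
  have hrange : ∀ s : ↥I ⊗[R] M, ∃ n, s ∈ LinearMap.range (lTensor (↥I) (N n).subtype) := by
    intro s
    induction s using TensorProduct.induction_on with
    | zero => exact ⟨0, Submodule.zero_mem _⟩
    | tmul a x =>
      obtain ⟨n, hn⟩ := hcc x
      exact ⟨n, ⟨a ⊗ₜ ⟨x, hn⟩, rfl⟩⟩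
    | add x y hx hy =>
      obtain ⟨n, u, hu⟩ := hx
      obtain ⟨m, v, hv⟩ := hy
      refine ⟨max n m, lTensor (↥I) (Submodule.inclusion (hmono (le_max_left n m))) u
        + lTensor (↥I) (Submodule.inclusion (hmono (le_max_right n m))) v, ?_⟩
      rw [map_add, ← lTensor_comp_apply, ← lTensor_comp_apply,
        Submodule.subtype_comp_inclusion, Submodule.subtype_comp_inclusion, hu, hv]
  obtain ⟨n, u, rfl⟩ := hrange t
  haveI := hflat n
  have h1 : rTensor M I.subtype (lTensor (↥I) (N n).subtype u)
      = lTensor R (N n).subtype (rTensor (↥(N n)) I.subtype u) := by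
    rw [← LinearMap.comp_apply, ← LinearMap.comp_apply,
      rTensor_comp_lTensor, lTensor_comp_rTensor]
  rw [h1] at ht
  have hinj1 : Function.Injective (lTensor R (N n).subtype) :=
    Module.Flat.lTensor_preserves_injective_linearMap _ (N n).injective_subtype
  have h2 : rTensor (↥(N n)) I.subtype u = 0 := by
    apply hinj1; rw [ht, map_zero]
  have hinj2 : Function.Injective (rTensor (↥(N n)) I.subtype) :=
    (Module.Flat.iff_rTensor_injective' (R := R) (M := ↥(N n))).mp (hflat n) I
  have : u = 0 := by apply hinj2; rw [h2, map_zero]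
  rw [this, map_zero]

variable (R : Type*) [CommRing R] (C : Type*) [AddCommGroup C] [Module R C]

theorem tpow_flat [Module.Flat R C] : ∀ n, Module.Flat R (Tpow R C n)
  | 0 => ‹Module.Flat R C›
  | n + 1 => by
    haveI := tpow_flat n
    show Module.Flat R (C ⊗[R] (Tpow R C n))
    infer_instance

variable {R C}

/-- `rTensor` on a "cocommuted" element. -/
theorem rtensor_comm {T : Type*} [AddCommGroup T] [Module R T]
    (g : C →ₗ[R] T) (t : C ⊗[R] C) :
    rTensor C g (TensorProduct.comm R C C t) = TensorProduct.comm R C T (lTensor C g t) := by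
  induction t using TensorProduct.induction_on with
  | zero => simp
  | tmul a b => simp
  | add x y hx hy => simp [map_add, hx, hy]

/-- Naturality of the associator in the last variable. -/
theorem assoc_nat {T : Type*} [AddCommGroup T] [Module R T]
    (g : C →ₗ[R] T) (t : (C ⊗[R] C) ⊗[R] C) :
    lTensor C (lTensor C g) (TensorProduct.assoc R C C C t)
      = TensorProduct.assoc R C C T (lTensor (C ⊗[R] C) g t) := by
  induction t using TensorProduct.induction_on with
  | zero => simp
  | tmul a c =>
    induction a using TensorProduct.induction_on with
    | zero => simp
    | tmul x y => simp
    | add x y hx hy => simp only [add_tmul, map_add, hx, hy]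
  | add x y hx hy => simp [map_add, hx, hy]

/-- `lTensor` and `rTensor` commute. -/
theorem lrTensor_comm {M N M' N' : Type*} [AddCommGroup M] [Module R M]
    [AddCommGroup N] [Module R N] [AddCommGroup M'] [Module R M']
    [AddCommGroup N'] [Module R N'] (f : M →ₗ[R] M') (g : N →ₗ[R] N') (t : M ⊗[R] N) :
    lTensor M' g (rTensor N f t) = rTensor N' f (lTensor M g t) := by
  induction t using TensorProduct.induction_on with
  | zero => simp
  | tmul a b => simp
  | add x y hx hy => simp [map_add, hx, hy]

/-- The primitive filtration is increasing (uses coassociativity). -/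
theorem ker_mono (δ : C →ₗ[R] C ⊗[R] C)
    (ha : ∀ x, TensorProduct.assoc R C C C (TensorProduct.map δ LinearMap.id (δ x)) =
      TensorProduct.map LinearMap.id δ (δ x)) (n : ℕ) :
    LinearMap.ker (Dit R C δ n) ≤ LinearMap.ker (Dit R C δ (n + 1)) := by
  intro x hx
  rw [LinearMap.mem_ker] at hx ⊢
  cases n with
  | zero =>
    have hx0 : x = 0 := hx
    rw [hx0, map_zero]
  | succ n =>
    have hx' : lTensor C (Dit R C δ n) (δ x) = 0 := hx
    calc (show C ⊗[R] (C ⊗[R] Tpow R C n) from Dit R C δ (n + 2) x)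
        = lTensor C ((lTensor C (Dit R C δ n)).comp δ) (δ x) := rfl
      _ = lTensor C (lTensor C (Dit R C δ n)) (lTensor C δ (δ x)) :=
          DFunLike.congr_fun (lTensor_comp C (lTensor C (Dit R C δ n)) δ) (δ x)
      _ = lTensor C (lTensor C (Dit R C δ n))
            (TensorProduct.assoc R C C C (rTensor C δ (δ x))) := by
          rw [show lTensor C δ (δ x)
            = TensorProduct.assoc R C C C (rTensor C δ (δ x)) from (ha x).symm]
      _ = TensorProduct.assoc R C C (Tpow R C n)
            (lTensor (C ⊗[R] C) (Dit R C δ n) (rTensor C δ (δ x))) := assoc_nat _ _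
      _ = TensorProduct.assoc R C C (Tpow R C n)
            (rTensor (Tpow R C n) δ (lTensor C (Dit R C δ n) (δ x))) := by
          rw [lrTensor_comm]
      _ = 0 := by rw [hx', map_zero, map_zero]

end Aux

/-- Let `C`, `D` be cocomplete cocommutative non-counital coalgebras
over `R` whose primitive filtration submodules are flat. If a morphism of
non-counital coalgebras `f : C → D` is injective on the primitive parts
`C₁ = ker δ_C`, then `f` is injective. -/
theorem stmt14 (k R : Type*) [Field k] [CharZero k] [CommRing R] [Algebra k R]
    (C D : Type*) [AddCommGroup C] [Module R C] [AddCommGroup D] [Module R D]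
    (δC : C →ₗ[R] C ⊗[R] C) (δD : D →ₗ[R] D ⊗[R] D)
    -- cocommutativity and coassociativity
    (hcC : ∀ x, TensorProduct.comm R C C (δC x) = δC x)
    (haC : ∀ x, TensorProduct.assoc R C C C (TensorProduct.map δC LinearMap.id (δC x)) =
      TensorProduct.map LinearMap.id δC (δC x))
    (hcD : ∀ x, TensorProduct.comm R D D (δD x) = δD x)
    (haD : ∀ x, TensorProduct.assoc R D D D (TensorProduct.map δD LinearMap.id (δD x)) =
      TensorProduct.map LinearMap.id δD (δD x))
    -- flatness of the primitive filtration submodules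
    (hfC : ∀ n, Module.Flat R ↥(LinearMap.ker (Dit R C δC n)))
    (hfD : ∀ n, Module.Flat R ↥(LinearMap.ker (Dit R D δD n)))
    -- cocompleteness
    (hccC : ∀ x : C, ∃ n, Dit R C δC n x = 0)
    (hccD : ∀ x : D, ∃ n, Dit R D δD n x = 0)
    -- `f` is a morphism of non-counital coalgebras
    (f : C →ₗ[R] D) (hf : ∀ x, δD (f x) = TensorProduct.map f f (δC x))
    -- injective on primitives
    (hf1 : ∀ x ∈ LinearMap.ker (Dit R C δC 1), f x = 0 → x = 0) :
    Function.Injective f := by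
  haveI flatC : Module.Flat R C :=
    flat_of_union (fun n => LinearMap.ker (Dit R C δC n))
      (monotone_nat_of_le_succ (ker_mono δC haC)) hfC
      (fun x => by obtain ⟨n, hn⟩ := hccC x; exact ⟨n, LinearMap.mem_ker.mpr hn⟩)
  haveI flatD : Module.Flat R D :=
    flat_of_union (fun n => LinearMap.ker (Dit R D δD n))
      (monotone_nat_of_le_succ (ker_mono δD haD)) hfD
      (fun x => by obtain ⟨n, hn⟩ := hccD x; exact ⟨n, LinearMap.mem_ker.mpr hn⟩)
  have key : ∀ n, ∀ x : C, Dit R C δC n x = 0 → f x = 0 → x = 0 := by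
    intro n
    induction n with
    | zero => intro x hx _; exact hx
    | succ n ih =>
      intro x hx hfx
      set g := Dit R C δC n with hg
      set K := LinearMap.ker g with hK
      haveI : Module.Flat R ↥K := hfC n
      haveI : Module.Flat R ↥(Tpow R C n) := tpow_flat R C n
      have hexact : Function.Exact K.subtype g := by
        rw [LinearMap.exact_iff, Submodule.range_subtype]
      -- step 1
      have h1 : lTensor C g (δC x) = 0 := hx
      -- step 2: the other side vanishes by cocommutativity
      have h2 : rTensor C g (δC x) = 0 := by
        have hc := rtensor_comm g (δC x)
        rw [hcC x] at hc
        rw [hc, h1, map_zero]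
      -- step 3: δC x comes from K ⊗ K
      obtain ⟨s, hs⟩ : δC x ∈ Set.range (lTensor C K.subtype) :=
        (Module.Flat.lTensor_exact C hexact (δC x)).mp h1
      have h3 : lTensor (Tpow R C n) K.subtype (rTensor (↥K) g s) = 0 := by
        rw [lrTensor_comm, hs, h2]
      have h4 : rTensor (↥K) g s = 0 :=
        Module.Flat.lTensor_preserves_injective_linearMap K.subtype K.injective_subtype
          (by rw [h3, map_zero])
      obtain ⟨u, hu⟩ : s ∈ Set.range (rTensor (↥K) K.subtype) :=
        (Module.Flat.rTensor_exact (↥K) hexact s).mp h4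
      have h5 : δC x = TensorProduct.map K.subtype K.subtype u := by
        rw [← hs, ← hu, ← LinearMap.comp_apply, lTensor_comp_rTensor]
      -- step 4: conclude δC x = 0
      have h6 : TensorProduct.map f f (δC x) = 0 := by
        rw [← hf x, hfx, map_zero]
      have h7 : TensorProduct.map (f.comp K.subtype) (f.comp K.subtype) u = 0 := by
        rw [TensorProduct.map_comp, LinearMap.comp_apply, ← h5, h6]
      have hinj : Function.Injective (f.comp K.subtype) := by
        rw [injective_iff_map_eq_zero]
        intro a ha
        exact Subtype.ext (ih a.1 (LinearMap.mem_ker.mp a.2) ha)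
      have h9 : Function.Injective (TensorProduct.map (f.comp K.subtype) (f.comp K.subtype)) := by
        rw [← lTensor_comp_rTensor, LinearMap.coe_comp]
        exact (Module.Flat.lTensor_preserves_injective_linearMap _ hinj).comp
          (Module.Flat.rTensor_preserves_injective_linearMap _ hinj)
      have hu0 : u = 0 := h9 (by rw [h7, map_zero])
      have hδ : δC x = 0 := by rw [h5, hu0, map_zero]
      -- x is primitive
      have hx1 : Dit R C δC 1 x = 0 := by
        have e : Dit R C δC 1 x = lTensor C (Dit R C δC 0) (δC x) := rfl
        rw [e, hδ, map_zero]; rfl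
      exact hf1 x (LinearMap.mem_ker.mpr hx1) hfx
  intro a b hab
  obtain ⟨n, hn⟩ := hccC (a - b)
  have : a - b = 0 := key n (a - b) hn (by rw [map_sub, hab, sub_self])
  exact sub_eq_zero.mp this
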